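/- If the pursuer's travel-time metric d_V satisfies the triangle inequality and the pursuer has a speed advantage along every edge (d_V(j,c) < T(j,c) for every child c of j), then for any node j and any path P_k = (s_k^1, ..., s_k^{ℓ_k}) with evader arrival times T_k(i) at the i-th node, the maximum over i of [T_k(i) - d_V(j, s_k^i)] is attained at the last node i = ℓ_k, i.e., max_{i=1..ℓ_k} (T_k(i) - d_V(j, s_k^i)) = T_k(ℓ_k) - d_V(j, s_k^{ℓ_k}). -/
import Mathlib

/-- Under the triangle inequality for the pursuer travel times `d` and the
speed advantage along every edge of the path (`d (s i) (s (i+1)) < Tk (i+1) - Tk i`),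
the maximum over the path nodes of `Tk i - d j (s i)` is attained at the last node. -/
theorem stmt_0 {V : Type*} (d : V → V → ℝ)
    (htri : ∀ a b c : V, d a c ≤ d a b + d b c)
    (ℓ : ℕ) (s : Fin (ℓ + 1) → V) (Tk : Fin (ℓ + 1) → ℝ)
    (hadv : ∀ i : Fin ℓ, d (s i.castSucc) (s i.succ) < Tk i.succ - Tk i.castSucc)
    (j : V) :
    Finset.univ.sup' Finset.univ_nonempty (fun i : Fin (ℓ + 1) => Tk i - d j (s i))
      = Tk (Fin.last ℓ) - d j (s (Fin.last ℓ)) := by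
  have hmono : Monotone (fun i : Fin (ℓ + 1) => Tk i - d j (s i)) := by
    apply Fin.monotone_iff_le_succ.mpr
    intro i
    have h1 := htri j (s i.castSucc) (s i.succ)
    have h2 := hadv i
    linarith
  apply le_antisymm
  · apply Finset.sup'_le
    intro i _
    exact hmono (Fin.le_last i)
  · exact Finset.le_sup' (fun i : Fin (ℓ + 1) => Tk i - d j (s i)) (Finset.mem_univ (Fin.last ℓ))
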